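/- Let Λ be a measurable space, γ a Markov kernel from Λ to Λ, μ a probability measure on Λ, and 𝒩 a set of probability measures on Λ. Then ϖ({ν.bind γ : ν ∈ 𝒩} | μ.bind γ) ≥ ϖ(𝒩 | μ), where μ.bind γ denotes the probability measure Ω ↦ ∫ γ(λ)(Ω) dμ(λ) obtained by composing μ with the kernel γ. -/

import Mathlib

open MeasureTheory ProbabilityTheory

/-- The asymmetric overlap `ϖ(𝒩|μ)`: the infimum of `μ Ω` over measurable sets `Ω`
that have full measure for every measure in `𝒩`. -/
noncomputable def asymmetricOverlap {Λ : Type*} [MeasurableSpace Λ]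
    (N : Set (Measure Λ)) (μ : Measure Λ) : ℝ :=
  sInf { x : ℝ | ∃ Ω : Set Λ, MeasurableSet Ω ∧ (∀ ν ∈ N, ν Ω = 1) ∧ x = (μ Ω).toReal }

theorem overlap_mono_under_kernel {Λ : Type*} [MeasurableSpace Λ]
    (γ : Kernel Λ Λ) [IsMarkovKernel γ]
    (μ : Measure Λ) [IsProbabilityMeasure μ]
    (N : Set (Measure Λ)) (hN : ∀ ν ∈ N, IsProbabilityMeasure ν) :
    asymmetricOverlap ((fun ν : Measure Λ => ν.bind γ) '' N) (μ.bind γ)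
      ≥ asymmetricOverlap N μ := by
  unfold asymmetricOverlap
  have hAbdd : BddBelow { x : ℝ | ∃ Ω : Set Λ, MeasurableSet Ω ∧
      (∀ ν ∈ N, ν Ω = 1) ∧ x = (μ Ω).toReal } := by
    refine ⟨0, fun x hx => ?_⟩
    obtain ⟨Ω, _, _, rfl⟩ := hx
    exact ENNReal.toReal_nonneg
  have hBne : { x : ℝ | ∃ Ω : Set Λ, MeasurableSet Ω ∧
      (∀ ν ∈ ((fun ν : Measure Λ => ν.bind γ) '' N), ν Ω = 1) ∧
      x = ((μ.bind γ) Ω).toReal }.Nonempty := by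
    refine ⟨((μ.bind γ) Set.univ).toReal, Set.univ, MeasurableSet.univ, ?_, rfl⟩
    rintro ν ⟨ν₀, hν₀, rfl⟩
    haveI := hN ν₀ hν₀
    rw [Measure.bind_apply MeasurableSet.univ γ.measurable.aemeasurable]
    simp
  apply le_csInf hBne
  rintro x ⟨Ω, hΩ, hfull, rfl⟩
  -- define the pullback set
  set Ω' : Set Λ := {lam | γ lam Ω = 1} with hΩ'def
  have hΩ'meas : MeasurableSet Ω' :=
    (γ.measurable_coe hΩ) (measurableSet_singleton 1)
  have hle1 : ∀ lam, γ lam Ω ≤ 1 := fun lam => prob_le_one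
  -- each ν ∈ N gives ν Ω' = 1
  have hνΩ' : ∀ ν ∈ N, ν Ω' = 1 := by
    intro ν hν
    haveI := hN ν hν
    have hbind : ∫⁻ lam, γ lam Ω ∂ν = 1 := by
      rw [← Measure.bind_apply hΩ γ.measurable.aemeasurable]
      exact hfull _ ⟨ν, hν, rfl⟩
    have hmeas : Measurable fun lam => γ lam Ω := γ.measurable_coe hΩ
    have hsub : ∫⁻ lam, (1 : ENNReal) - γ lam Ω ∂ν = 0 := by
      rw [lintegral_sub hmeas (by rw [hbind]; exact ENNReal.one_ne_top)
        (Filter.Eventually.of_forall hle1)]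
      simp [hbind]
    have hae : ∀ᵐ lam ∂ν, (1 : ENNReal) - γ lam Ω = 0 :=
      (lintegral_eq_zero_iff (measurable_const.sub hmeas)).mp hsub
    have hae1 : ∀ᵐ lam ∂ν, γ lam Ω = 1 := by
      filter_upwards [hae] with lam h
      exact le_antisymm (hle1 lam) (tsub_eq_zero_iff_le.mp h)
    rw [← prob_compl_eq_zero_iff hΩ'meas]
    rw [ae_iff] at hae1
    convert hae1 using 2
    rfl
  -- μ Ω' ≤ (μ.bind γ) Ω
  have hkey : μ Ω' ≤ (μ.bind γ) Ω := by
    rw [Measure.bind_apply hΩ γ.measurable.aemeasurable, ← lintegral_indicator_one hΩ'meas]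
    apply lintegral_mono
    intro lam
    by_cases h : lam ∈ Ω'
    · simpa [Set.indicator_of_mem h] using ge_of_eq h
    · simp [Set.indicator_of_notMem h]
  calc sInf { x : ℝ | ∃ Ω : Set Λ, MeasurableSet Ω ∧
        (∀ ν ∈ N, ν Ω = 1) ∧ x = (μ Ω).toReal }
      ≤ (μ Ω').toReal := csInf_le hAbdd ⟨Ω', hΩ'meas, hνΩ', rfl⟩
    _ ≤ ((μ.bind γ) Ω).toReal := by
        have hbindle : (μ.bind γ) Ω ≤ 1 := by
          rw [Measure.bind_apply hΩ γ.measurable.aemeasurable]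
          calc ∫⁻ lam, γ lam Ω ∂μ ≤ ∫⁻ _, 1 ∂μ := lintegral_mono hle1
            _ = 1 := by simp
        exact (ENNReal.toReal_le_toReal
          (ne_top_of_le_ne_top ENNReal.one_ne_top (hkey.trans hbindle))
          (ne_top_of_le_ne_top ENNReal.one_ne_top hbindle)).mpr hkey
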